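/- Let s ≥ 3, n ≥ 0 and let X, Y be level-n configurations with card X = card Y. Then for every integer z, the number of level-(n+1) configurations Z with card Z = z and πZ = X equals the number of level-(n+1) configurations Z with card Z = z and πZ = Y; that is, c_n(s, X, z) = c_n(s, Y, z). -/

import Mathlib

/-- `s' = ⌈(s+1)/2⌉`, the strict-majority threshold for group size `s`. -/
def sPrime (s : ℕ) : ℕ := (s + 2) / 2

/-- Number of entries equal to `+1` (encoded as `true`) in a configuration. -/
def cfgCard {m : ℕ} (X : Fin m → Bool) : ℕ :=
  (Finset.univ.filter fun i => X i = true).card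

/-- The one-step induction map `π` sending a level-`(n+1)` configuration to a
level-`n` configuration by the majority rule with ties resolved in favor of `-1`. -/
def piMap (s n : ℕ) (Z : Fin (s ^ (n + 1)) → Bool) : Fin (s ^ n) → Bool :=
  fun i => decide (sPrime s ≤ (Finset.univ.filter fun j : Fin s =>
    Z ⟨s * (i : ℕ) + (j : ℕ), by
      have h1 : (i : ℕ) + 1 ≤ s ^ n := i.isLt
      have h2 : (j : ℕ) < s := j.isLt
      have h3 : s * ((i : ℕ) + 1) ≤ s * s ^ n := Nat.mul_le_mul_left _ h1
      have h4 : s * ((i : ℕ) + 1) = s * (i : ℕ) + s := by ring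
      have h5 : s ^ (n + 1) = s * s ^ n := by rw [pow_succ, Nat.mul_comm]
      omega⟩ = true).card)

/-- `c_n(s, X, z)`: the number of level-`(n+1)` configurations `Z` with
`card Z = z` and `πZ = X`. -/
def cCount (s n : ℕ) (X : Fin (s ^ n) → Bool) (z : ℕ) : ℕ :=
  (Finset.univ.filter fun Z : Fin (s ^ (n + 1)) → Bool =>
    cfgCard Z = z ∧ piMap s n Z = X).card

/-- The block permutation induced by a permutation of blocks. -/
def blockPerm (s n : ℕ) (σ : Equiv.Perm (Fin (s ^ n))) :
    Equiv.Perm (Fin (s ^ (n + 1))) :=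
  (finCongr (pow_succ s n)).trans <|
    (finProdFinEquiv.symm.trans <|
      ((σ.prodCongr (Equiv.refl (Fin s))).trans finProdFinEquiv)).trans
      (finCongr (pow_succ s n).symm)

lemma blockPerm_apply (s n : ℕ) (σ : Equiv.Perm (Fin (s ^ n)))
    (i : Fin (s ^ n)) (j : Fin s) (h1 : s * (i : ℕ) + (j : ℕ) < s ^ (n + 1))
    (h2 : s * ((σ i : Fin (s ^ n)) : ℕ) + (j : ℕ) < s ^ (n + 1)) :
    blockPerm s n σ ⟨s * (i : ℕ) + (j : ℕ), h1⟩ = ⟨s * ((σ i : Fin (s^n)) : ℕ) + (j : ℕ), h2⟩ := by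
  have key : finProdFinEquiv.symm ((finCongr (pow_succ s n)) ⟨s * (i : ℕ) + (j : ℕ), h1⟩) = (i, j) := by
    apply finProdFinEquiv.symm_apply_eq.mpr
    ext
    simp only [finCongr_apply, Fin.coe_cast, finProdFinEquiv, Equiv.coe_fn_symm_mk, Equiv.coe_fn_mk, Fin.divNat, Fin.modNat]
    omega
  simp only [blockPerm, Equiv.trans_apply, key, Equiv.prodCongr_apply, Prod.map,
    Equiv.refl_apply]
  ext
  simp only [finCongr_apply, Fin.coe_cast, finProdFinEquiv, Equiv.coe_fn_mk]
  omega

lemma cfgCard_comp_equiv {m : ℕ} (e : Equiv.Perm (Fin m)) (Z : Fin m → Bool) :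
    cfgCard (Z ∘ e) = cfgCard Z := by
  unfold cfgCard
  apply Finset.card_equiv e
  intro i
  simp

lemma idx_lt (s n : ℕ) (k : Fin (s ^ n)) (j : Fin s) :
    s * (k : ℕ) + (j : ℕ) < s ^ (n + 1) := by
  have h5 : s ^ (n + 1) = s * s ^ n := by rw [pow_succ, Nat.mul_comm]
  have h3 : s * ((k : ℕ) + 1) ≤ s * s ^ n := Nat.mul_le_mul_left _ k.isLt
  have h4 : s * ((k : ℕ) + 1) = s * (k : ℕ) + s := by ring
  have h2 := j.isLt
  omega

lemma piMap_comp_blockPerm (s n : ℕ) (σ : Equiv.Perm (Fin (s ^ n)))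
    (Z : Fin (s ^ (n + 1)) → Bool) :
    piMap s n (Z ∘ blockPerm s n σ) = (piMap s n Z) ∘ σ := by
  funext i
  unfold piMap
  simp only [Function.comp_apply]
  have hle : ∀ (a b c : ℕ), b = c → (decide (a ≤ b) = decide (a ≤ c)) :=
    fun a b c h => by rw [h]
  apply hle
  apply Finset.card_bij (fun j _ => j) ?_ (fun a _ b _ hab => hab)
    (fun b hb => ⟨b, ?_, rfl⟩)
  · intro j hj
    simp only [Finset.mem_filter, Finset.mem_univ, true_and] at hj ⊢
    rw [blockPerm_apply s n σ i j _ (idx_lt s n (σ i) j)] at hj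
    exact hj
  · simp only [Finset.mem_filter, Finset.mem_univ, true_and] at hb ⊢
    rw [blockPerm_apply s n σ i b _ (idx_lt s n (σ i) b)]
    exact hb

lemma exists_perm {m : ℕ} (X Y : Fin m → Bool) (h : cfgCard X = cfgCard Y) :
    ∃ σ : Equiv.Perm (Fin m), ∀ i, Y (σ i) = X i := by
  have h1 : Fintype.card {i // X i = true} = Fintype.card {i // Y i = true} := by
    simpa [Fintype.card_subtype, cfgCard] using h
  have h2 : Fintype.card {i // ¬ X i = true} = Fintype.card {i // ¬ Y i = true} := by
    rw [Fintype.card_subtype_compl, Fintype.card_subtype_compl, h1]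
  obtain ⟨e₁⟩ := Fintype.card_eq.mp h1
  obtain ⟨e₂⟩ := Fintype.card_eq.mp h2
  refine ⟨(Equiv.sumCompl (fun i => X i = true)).symm.trans
    ((e₁.sumCongr e₂).trans (Equiv.sumCompl (fun i => Y i = true))), ?_⟩
  intro i
  by_cases hX : X i = true
  · rw [Equiv.trans_apply, Equiv.trans_apply,
      Equiv.sumCompl_symm_apply_of_pos (p := fun k => X k = true) hX]
    simp only [Equiv.sumCongr_apply, Sum.map_inl, Equiv.sumCompl_apply_inl]
    exact (e₁ ⟨i, hX⟩).2.trans hX.symm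
  · rw [Equiv.trans_apply, Equiv.trans_apply,
      Equiv.sumCompl_symm_apply_of_neg (p := fun k => X k = true) hX]
    simp only [Equiv.sumCongr_apply, Sum.map_inr, Equiv.sumCompl_apply_inr]
    have h3 := (e₂ ⟨i, hX⟩).2
    simp only [Bool.not_eq_true] at h3 hX
    rw [h3, hX]

/-- `c_n(s, X, z)` depends on `X` only through `card X`. -/
theorem cCount_eq_of_card_eq (s n : ℕ) (hs : 3 ≤ s)
    (X Y : Fin (s ^ n) → Bool) (h : cfgCard X = cfgCard Y) (z : ℕ) :
    cCount s n X z = cCount s n Y z := by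
  obtain ⟨σ, hσ⟩ := exists_perm X Y h
  unfold cCount
  apply Finset.card_bij' (fun Z _ => Z ∘ (blockPerm s n σ).symm)
    (fun Z _ => Z ∘ blockPerm s n σ)
  · intro Z hZ
    simp only [Finset.mem_filter, Finset.mem_univ, true_and] at hZ ⊢
    obtain ⟨hc, hp⟩ := hZ
    refine ⟨(cfgCard_comp_equiv _ _).trans hc, ?_⟩
    have key : piMap s n ((Z ∘ (blockPerm s n σ).symm) ∘ blockPerm s n σ) =
        piMap s n (Z ∘ (blockPerm s n σ).symm) ∘ σ := piMap_comp_blockPerm s n σ _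
    have heq : (Z ∘ (blockPerm s n σ).symm) ∘ blockPerm s n σ = Z := by
      funext a; simp
    rw [heq, hp] at key
    funext i
    have h2 := congrFun key (σ.symm i)
    simp only [Function.comp_apply, Equiv.apply_symm_apply] at h2
    rw [← h2, ← hσ (σ.symm i), Equiv.apply_symm_apply]
  · intro Z hZ
    simp only [Finset.mem_filter, Finset.mem_univ, true_and] at hZ ⊢
    obtain ⟨hc, hp⟩ := hZ
    refine ⟨(cfgCard_comp_equiv _ _).trans hc, ?_⟩
    rw [piMap_comp_blockPerm, hp]
    funext i
    simp only [Function.comp_apply]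
    exact hσ i
  · intro Z _; funext a; simp
  · intro Z _; funext a; simp
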